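/- There exist constants C > 0 and γ₀ > 0 such that for every complex number ζ = γ + iδ with γ = Re ζ ≥ γ₀ one has |∫_ℝ e^{−ζ|t|} φ_ζ^+(t) dt| ≤ C e^{−γ} and |∫_ℝ e^{−ζ|t|} φ_ζ^−(t) dt| ≤ C e^{−γ}. -/

import Mathlib

open Set Filter

/-- The function `φ_ζ^+`. -/
noncomputable def phiP (ζ : ℂ) (x : ℝ) : ℂ :=
  if x < -1 then 0
  else if x ≤ 1 then Complex.sinh (ζ * (x + 1)) / Complex.sinh (2 * ζ)
  else Complex.exp (-ζ * (x - 1))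

/-- The function `φ_ζ^−(x) = φ_ζ^+(−x)`. -/
noncomputable def phiM (ζ : ℂ) (x : ℝ) : ℂ := phiP ζ (-x)

lemma myint_exp_neg_abs :
    MeasureTheory.Integrable (fun x : ℝ => Real.exp (-|x|)) := by
  have h1 : MeasureTheory.IntegrableOn (fun x : ℝ => Real.exp (-|x|)) (Iic 0) := by
    apply ((integrableOn_exp_Iic 0).congr_fun ?_ measurableSet_Iic)
    intro x hx
    simp [abs_of_nonpos (mem_Iic.mp hx)]
  have h2 : MeasureTheory.IntegrableOn (fun x : ℝ => Real.exp (-|x|)) (Ioi 0) := by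
    apply ((exp_neg_integrableOn_Ioi 0 one_pos).congr_fun ?_ measurableSet_Ioi)
    intro x hx
    simp [abs_of_pos (mem_Ioi.mp hx)]
  have := h1.union h2
  rw [Iic_union_Ioi] at this
  exact MeasureTheory.integrableOn_univ.mp this

lemma myval_exp_neg_abs : (∫ x : ℝ, Real.exp (-|x|)) = 2 := by
  have h1 : MeasureTheory.IntegrableOn (fun x : ℝ => Real.exp (-|x|)) (Iic 0) :=
    myint_exp_neg_abs.integrableOn
  have h2 : MeasureTheory.IntegrableOn (fun x : ℝ => Real.exp (-|x|)) (Ioi 0) :=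
    myint_exp_neg_abs.integrableOn
  rw [← intervalIntegral.integral_Iic_add_Ioi h1 h2]
  have e1 : (∫ x : ℝ in Iic 0, Real.exp (-|x|)) = 1 := by
    rw [MeasureTheory.setIntegral_congr_fun measurableSet_Iic
      (g := fun x : ℝ => Real.exp x) (fun x hx => by simp [abs_of_nonpos (mem_Iic.mp hx)])]
    exact integral_exp_Iic_zero
  have e2 : (∫ x : ℝ in Ioi 0, Real.exp (-|x|)) = 1 := by
    rw [MeasureTheory.setIntegral_congr_fun measurableSet_Ioi
      (g := fun x : ℝ => Real.exp (-x)) (fun x hx => by simp [abs_of_pos (mem_Ioi.mp hx)])]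
    exact integral_exp_neg_Ioi_zero
  rw [e1, e2]; norm_num

lemma key_bound (ζ : ℂ) (hγ : 1 ≤ ζ.re) (x : ℝ) :
    ‖Complex.exp (-ζ * |x|) * phiP ζ x‖ ≤
      4 * Real.exp (1 - ζ.re) * Real.exp (-|x|) := by
  set γ := ζ.re with hγdef
  have hγ0 : (0:ℝ) < γ := lt_of_lt_of_le one_pos hγ
  have hre : ((-ζ) * ((|x| : ℝ) : ℂ)).re = -γ * |x| := by
    simp [Complex.mul_re]
    exact Or.inl rfl
  unfold phiP
  split_ifs with hx1 hx2
  · simp only [mul_zero, norm_zero]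
    positivity
  · -- middle case: -1 ≤ x ≤ 1
    push_neg at hx1
    have hax : |x| ≤ 1 := abs_le.mpr ⟨hx1, hx2⟩
    have hs_up : ‖Complex.sinh (ζ * (↑x + 1))‖ ≤ Real.exp (γ * (x + 1)) := by
      rw [show Complex.sinh (ζ * (↑x + 1)) = (Complex.exp (ζ * (↑x + 1)) - Complex.exp (-(ζ * (↑x + 1)))) / 2 by rw [← Complex.two_sinh]; ring]
      have hre2 : (ζ * ((x:ℂ) + 1)).re = γ * (x + 1) := by
        have : ((x:ℂ) + 1) = ((x + 1 : ℝ) : ℂ) := by push_cast; ring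
        rw [this, Complex.mul_re]
        simp
        exact Or.inl rfl
      have h0 : 0 ≤ γ * (x + 1) := mul_nonneg hγ0.le (by linarith)
      calc ‖(Complex.exp (ζ * (↑x + 1)) - Complex.exp (-(ζ * (↑x + 1)))) / 2‖
          ≤ (‖Complex.exp (ζ * (↑x + 1))‖
              + ‖Complex.exp (-(ζ * (↑x + 1)))‖) / 2 := by
            rw [norm_div]
            simp only [Complex.norm_two]
            have := norm_sub_le (Complex.exp (ζ * (↑x + 1))) (Complex.exp (-(ζ * (↑x + 1))))
            linarith
        _ = (Real.exp (γ * (x+1)) + Real.exp (-(γ * (x+1)))) / 2 := by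
            rw [Complex.norm_exp, Complex.norm_exp, Complex.neg_re, hre2]
        _ ≤ Real.exp (γ * (x+1)) := by
            have h1 : Real.exp (-(γ * (x+1))) ≤ Real.exp (γ * (x+1)) :=
              Real.exp_le_exp.mpr (by linarith)
            linarith
    have hs_lo : Real.exp (2 * γ) / 4 ≤ ‖Complex.sinh (2 * ζ)‖ := by
      rw [show Complex.sinh (2 * ζ) = (Complex.exp (2 * ζ) - Complex.exp (-(2 * ζ))) / 2 by rw [← Complex.two_sinh]; ring]
      have hre2 : (2 * ζ).re = 2 * γ := by simp [Complex.mul_re]; rfl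
      have hlow : Real.exp (2*γ) - Real.exp (-(2*γ)) ≤
          ‖Complex.exp (2*ζ) - Complex.exp (-(2*ζ))‖ := by
        have := norm_sub_norm_le (Complex.exp (2*ζ)) (Complex.exp (-(2*ζ)))
        rwa [Complex.norm_exp, Complex.norm_exp, Complex.neg_re, hre2] at this
      rw [norm_div, Complex.norm_two]
      have hsmall : Real.exp (-(2*γ)) ≤ Real.exp (2*γ) / 2 := by
        rw [le_div_iff₀ (by norm_num : (0:ℝ) < 2)]
        have : Real.exp (-(2*γ)) * 2 ≤ 1 * 2 := by
          have : Real.exp (-(2*γ)) ≤ 1 := Real.exp_le_one_iff.mpr (by linarith)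
          linarith
        calc Real.exp (-(2*γ)) * 2 ≤ 2 := by linarith
          _ ≤ Real.exp (2*γ) := by
              have := Real.add_one_le_exp (2*γ)
              linarith
      linarith
    have hBpos : (0:ℝ) < ‖Complex.sinh (2 * ζ)‖ :=
      lt_of_lt_of_le (by positivity) hs_lo
    rw [norm_mul, norm_div, Complex.norm_exp, hre]
    calc Real.exp (-γ * |x|) * (‖Complex.sinh (ζ * (↑x + 1))‖
            / ‖Complex.sinh (2 * ζ)‖)
        ≤ Real.exp (-γ * |x|) * (Real.exp (γ * (x + 1)) / (Real.exp (2*γ) / 4)) := by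
          have hd := div_le_div₀ (Real.exp_nonneg _) hs_up (by positivity) hs_lo
          exact mul_le_mul_of_nonneg_left hd (Real.exp_nonneg _)
      _ = 4 * Real.exp (γ * (x+1) + (-γ * |x|) - 2*γ) := by
          rw [Real.exp_sub, Real.exp_add]
          field_simp
      _ ≤ 4 * Real.exp ((1 - γ) + (-|x|)) := by
          gcongr
          nlinarith [abs_nonneg x, le_abs_self x, mul_nonneg (sub_nonneg.mpr hγ) (sub_nonneg.mpr (le_abs_self x))]
      _ = 4 * Real.exp (1 - γ) * Real.exp (-|x|) := by
          rw [Real.exp_add]; ring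
  · -- right case: x > 1
    push_neg at hx2
    have hax : |x| = x := abs_of_pos (by linarith)
    rw [norm_mul, Complex.norm_exp, Complex.norm_exp, hre]
    have hre2 : ((-ζ) * ((x:ℂ) - 1)).re = -γ * (x - 1) := by
      have : ((x:ℂ) - 1) = ((x - 1 : ℝ) : ℂ) := by push_cast; ring
      rw [this, Complex.mul_re]
      simp
      exact Or.inl rfl
    rw [hre2, ← Real.exp_add, hax]
    have h4 : Real.exp (-γ * x + -γ * (x-1)) ≤ Real.exp ((1-γ) + (-x)) := by
      apply Real.exp_le_exp.mpr
      nlinarith [mul_nonneg (by linarith : (0:ℝ) ≤ 2*γ - 1) (by linarith : (0:ℝ) ≤ x - 1)]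
    calc Real.exp (-γ * x + -γ * (x-1)) ≤ Real.exp ((1-γ) + (-x)) := h4
      _ = Real.exp (1-γ) * Real.exp (-x) := Real.exp_add _ _
      _ ≤ 4 * Real.exp (1-γ) * Real.exp (-x) := by nlinarith [Real.exp_pos (1-γ), Real.exp_pos (-x)]

lemma helper (γ : ℝ) (f : ℝ → ℂ)
    (hf : ∀ t, ‖f t‖ ≤ 4 * Real.exp (1 - γ) * Real.exp (-|t|)) :
    ‖∫ t : ℝ, f t‖ ≤ 8 * Real.exp 1 * Real.exp (-γ) := by
  have hg : MeasureTheory.Integrable (fun t : ℝ => 4 * Real.exp (1 - γ) * Real.exp (-|t|)) :=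
    myint_exp_neg_abs.const_mul _
  calc ‖∫ t : ℝ, f t‖ ≤ ∫ t : ℝ, ‖f t‖ := MeasureTheory.norm_integral_le_integral_norm f
    _ ≤ ∫ t : ℝ, 4 * Real.exp (1 - γ) * Real.exp (-|t|) := by
        apply MeasureTheory.integral_mono_of_nonneg
          (Eventually.of_forall fun t => norm_nonneg _) hg
        exact Eventually.of_forall fun t => by simpa using hf t
    _ = 4 * Real.exp (1 - γ) * ∫ t : ℝ, Real.exp (-|t|) := by
        rw [MeasureTheory.integral_const_mul]
    _ = 8 * Real.exp 1 * Real.exp (-γ) := by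
        rw [myval_exp_neg_abs, show (1:ℝ) - γ = 1 + (-γ) by ring, Real.exp_add]
        ring

theorem stmt18 :
    ∃ C > (0 : ℝ), ∃ γ₀ > (0 : ℝ), ∀ ζ : ℂ, γ₀ ≤ ζ.re →
      ‖∫ t : ℝ, Complex.exp (-ζ * |t|) * phiP ζ t‖ ≤
        C * Real.exp (-ζ.re) ∧
      ‖∫ t : ℝ, Complex.exp (-ζ * |t|) * phiM ζ t‖ ≤
        C * Real.exp (-ζ.re) := by
  refine ⟨8 * Real.exp 1, by positivity, 1, one_pos, fun ζ hζ => ?_⟩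
  constructor
  · exact helper ζ.re _ (fun t => key_bound ζ hζ t)
  · apply helper ζ.re _ (fun t => ?_)
    have := key_bound ζ hζ (-t)
    rw [abs_neg] at this
    exact this
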